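/- For every positive integer m, the absolute value of the sum over k ∈ ℤ of (1/3)·1/((2k+1−2m)(2m+2k+1)) is strictly less than π²/4 − 1/3. -/

import Mathlib

open Filter Finset Topology

theorem stmt_3 (m : ℤ) (hm : 0 < m) :
    |∑' k : ℤ, (1 / 3 : ℝ) *
        (1 / ((2 * (k : ℝ) + 1 - 2 * (m : ℝ)) * (2 * (m : ℝ) + 2 * (k : ℝ) + 1)))| <
      Real.pi ^ 2 / 4 - 1 / 3 := by
  set f : ℤ → ℝ := fun k => (1 / 3 : ℝ) *
      (1 / ((2 * (k : ℝ) + 1 - 2 * (m : ℝ)) * (2 * (m : ℝ) + 2 * (k : ℝ) + 1))) with hf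
  have hmn : ((m.toNat : ℝ)) = (m : ℝ) := by
    exact_mod_cast congrArg (Int.cast : ℤ → ℝ) (Int.toNat_of_nonneg hm.le)
  set d : ℕ := 2 * m.toNat with hd
  set G : ℕ → ℝ := fun k => 1 / (12 * (m : ℝ)) * (1 / (2 * (k : ℝ) + 1 - 2 * (m : ℝ)))
    with hG
  have hm0 : (m : ℝ) ≠ 0 := by
    simpa using (Int.cast_ne_zero (α := ℝ)).mpr hm.ne'
  have hA : ∀ k : ℕ, (2 * (k : ℝ) + 1 - 2 * (m : ℝ)) ≠ 0 := by
    intro k h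
    have : (2 * (k : ℤ) + 1 - 2 * m : ℤ) = 0 := by exact_mod_cast h
    omega
  have hB : ∀ k : ℕ, (2 * (m : ℝ) + 2 * (k : ℝ) + 1) ≠ 0 := by
    intro k h
    have : (2 * m + 2 * (k : ℤ) + 1 : ℤ) = 0 := by exact_mod_cast h
    omega
  have key : ∀ k : ℕ, f k = G k - G (k + d) := by
    intro k
    have hc : ((k + d : ℕ) : ℝ) = (k : ℝ) + 2 * (m : ℝ) := by
      push_cast [hd]
      rw [hmn]
    have h1 := hA k
    have h2 := hB k
    have h2' : (2 * ((k : ℝ) + 2 * (m : ℝ)) + 1 - 2 * (m : ℝ)) ≠ 0 := by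
      intro h; apply hB k; linarith
    simp only [hf, hG, hc]
    push_cast
    field_simp
    ring
  -- summability over ℕ
  have hFsum : Summable (fun k : ℕ => f k) := by
    apply Summable.of_norm_bounded_eventually_nat (g := fun k : ℕ => 1 / 3 * (1 / (k : ℝ) ^ 2))
    · exact (Real.summable_one_div_nat_pow.mpr one_lt_two).mul_left _
    · filter_upwards [eventually_ge_atTop (2 * m.toNat + 1)] with k hk
      have hmr : (0 : ℝ) < (m : ℝ) := by exact_mod_cast hm
      have hk2 : 2 * (m : ℝ) + 1 ≤ (k : ℝ) := by
        rw [← hmn]; exact_mod_cast hk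
      have hk0 : (0 : ℝ) < (k : ℝ) := by linarith
      have hApos : (0 : ℝ) < 2 * (k : ℝ) + 1 - 2 * (m : ℝ) := by linarith
      have hBpos : (0 : ℝ) < 2 * (m : ℝ) + 2 * (k : ℝ) + 1 := by linarith
      have habs : ‖f (k : ℤ)‖ = (1 / 3 : ℝ) *
          (1 / ((2 * (k : ℝ) + 1 - 2 * (m : ℝ)) * (2 * (m : ℝ) + 2 * (k : ℝ) + 1))) := by
        rw [Real.norm_eq_abs, abs_of_pos]
        · simp [hf]
        · simp only [hf]; positivity
      rw [habs]
      gcongr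
      nlinarith
  -- boundary sum is zero
  have hrefl : ∑ i ∈ range d, (1 / (2 * (i : ℝ) + 1 - 2 * (m : ℝ))) = 0 := by
    have h := Finset.sum_range_reflect (fun j : ℕ => (1 : ℝ) / (2 * (j : ℝ) + 1 - 2 * (m : ℝ))) d
    have h2 : ∑ j ∈ range d, (1 : ℝ) / (2 * ((d - 1 - j : ℕ) : ℝ) + 1 - 2 * (m : ℝ))
        = ∑ j ∈ range d, -((1 : ℝ) / (2 * (j : ℝ) + 1 - 2 * (m : ℝ))) := by
      apply Finset.sum_congr rfl
      intro j hj
      rw [Finset.mem_range] at hj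
      have hnat : (d - 1 - j : ℕ) = d - (j + 1) := by omega
      have hle : j + 1 ≤ d := hj
      have hcast : ((d - 1 - j : ℕ) : ℝ) = (d : ℝ) - 1 - (j : ℝ) := by
        rw [hnat, Nat.cast_sub hle]; push_cast; ring
      have hdr : (d : ℝ) = 2 * (m : ℝ) := by
        rw [hd]; push_cast; rw [hmn]
      rw [hcast, hdr,
        show 2 * (2 * (m : ℝ) - 1 - (j : ℝ)) + 1 - 2 * (m : ℝ)
          = -(2 * (j : ℝ) + 1 - 2 * (m : ℝ)) by ring, div_neg]
    rw [h2, Finset.sum_neg_distrib] at h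
    linarith
  have hGzero : ∑ i ∈ range d, G i = 0 := by
    simp only [hG]
    rw [← Finset.mul_sum, hrefl, mul_zero]
  -- partial sums formula
  have hps : ∀ N : ℕ, ∑ k ∈ range N, f k =
      ∑ i ∈ range d, G i - ∑ i ∈ range d, G (N + i) := by
    intro N
    have e1 : ∑ k ∈ range N, f (k : ℤ) = ∑ k ∈ range N, G k - ∑ k ∈ range N, G (k + d) := by
      rw [← Finset.sum_sub_distrib]
      exact Finset.sum_congr rfl fun k _ => key k
    have e2 := Finset.sum_range_add G N d
    have e3 := Finset.sum_range_add G d N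
    have e4 : ∑ k ∈ range N, G (k + d) = ∑ k ∈ range N, G (d + k) :=
      Finset.sum_congr rfl fun k _ => by rw [Nat.add_comm]
    rw [Nat.add_comm N d] at e2
    rw [e1, e4]
    linarith
  -- tail tends to zero
  have htail : Tendsto (fun N : ℕ => ∑ i ∈ range d, G (N + i)) atTop (𝓝 0) := by
    have h0 : (0 : ℝ) = ∑ _i ∈ range d, (0 : ℝ) := by simp
    rw [h0]
    apply tendsto_finset_sum
    intro i _
    have h1 : Tendsto (fun N : ℕ => 2 * (N : ℝ) + (2 * (i : ℝ) + 1 - 2 * (m : ℝ)))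
        atTop atTop :=
      tendsto_atTop_add_const_right _ _
        (tendsto_natCast_atTop_atTop.const_mul_atTop two_pos)
    have h2 : Tendsto (fun N : ℕ =>
        (2 * (N : ℝ) + (2 * (i : ℝ) + 1 - 2 * (m : ℝ)))⁻¹) atTop (𝓝 0) :=
      h1.inv_tendsto_atTop
    have h3 := h2.const_mul (1 / (12 * (m : ℝ)))
    rw [mul_zero] at h3
    apply h3.congr
    intro N
    simp only [hG, one_div]
    push_cast
    ring_nf
  have hlim : Tendsto (fun N : ℕ => ∑ k ∈ range N, f (k : ℤ)) atTop (𝓝 0) := by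
    have heq : (fun N : ℕ => ∑ k ∈ range N, f (k : ℤ)) =
        fun N => ∑ i ∈ range d, G i - ∑ i ∈ range d, G (N + i) := funext hps
    rw [heq, hGzero]
    simpa using (htail.const_sub 0)
  have htsum : ∑' k : ℕ, f (k : ℤ) = 0 :=
    tendsto_nhds_unique hFsum.hasSum.tendsto_sum_nat hlim
  have hnat : HasSum (fun k : ℕ => f (k : ℤ)) 0 := htsum ▸ hFsum.hasSum
  have hneg : (fun n : ℕ => f (-((n : ℤ) + 1))) = fun n : ℕ => f (n : ℤ) := by
    funext n
    simp only [hf]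
    push_cast
    ring_nf
  have hZ : HasSum f 0 := by
    have := HasSum.of_nat_of_neg_add_one hnat (by rw [hneg]; exact hnat)
    simpa using this
  rw [hZ.tsum_eq, abs_zero]
  nlinarith [Real.pi_gt_three]
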